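/- arXiv:1905.11512 — 4 statements merged into one kernel-verified Lean document; each statement's English description precedes it below -/
import Mathlib

section
/- Let G be a finite simple graph on n vertices in which every vertex has degree at least τ, where τ ≥ 1. Then for any two vertices u, v in the same connected component of G, dist_G(u, v) ≤ 4n/τ. -/
/-- Triangle inequality for graph distance between reachable vertices. -/
lemma stmt2_tri {V : Type*} {G : SimpleGraph V} {a b c : V}
    (h1 : G.Reachable a b) (h2 : G.Reachable b c) :
    G.dist a c ≤ G.dist a b + G.dist b c := by
  obtain ⟨p, hp⟩ := h1.exists_walk_length_eq_dist
  obtain ⟨q, hq⟩ := h2.exists_walk_length_eq_dist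
  rw [← hp, ← hq, ← SimpleGraph.Walk.length_append]
  exact SimpleGraph.dist_le _

/-- The vertex at position `i` along a walk from `u` is within distance `i` of `u`. -/
lemma stmt2_dist_getVert_le {V : Type*} {G : SimpleGraph V} {u v : V}
    (p : G.Walk u v) (i : ℕ) : G.dist u (p.getVert i) ≤ i := by
  induction p generalizing i with
  | nil => simp [SimpleGraph.Walk.getVert, SimpleGraph.dist_self]
  | @cons a b c hadj q ih =>
    cases i with
    | zero => simp
    | succ n =>
      rw [SimpleGraph.Walk.getVert_cons_succ]
      have h1 : G.dist a b ≤ 1 := by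
        simpa using SimpleGraph.dist_le (SimpleGraph.Walk.cons hadj SimpleGraph.Walk.nil)
      have h2 : G.Reachable b (q.getVert n) := q.reachable.trans (q.drop n).reachable.symm
      calc G.dist a (q.getVert n) ≤ G.dist a b + G.dist b (q.getVert n) :=
            stmt2_tri ⟨SimpleGraph.Walk.cons hadj SimpleGraph.Walk.nil⟩ h2
        _ ≤ 1 + n := Nat.add_le_add h1 (ih n)
        _ = n + 1 := Nat.add_comm 1 n

/-- if all degrees are at least τ, then vertices in the same
connected component are at distance at most 4n/τ. -/
theorem stmt2 {V : Type*} [Fintype V] (G : SimpleGraph V) [DecidableRel G.Adj]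
    (τ : ℕ) (hτ : 1 ≤ τ) (hdeg : ∀ v : V, τ ≤ G.degree v)
    (u v : V) (h : G.Reachable u v) :
    (G.dist u v : ℝ) ≤ 4 * (Fintype.card V : ℝ) / (τ : ℝ) := by
  classical
  obtain ⟨p, hp⟩ := h.exists_walk_length_eq_dist
  set d := G.dist u v with hd
  set w : ℕ → V := p.getVert with hw
  -- reachability of intermediate vertices
  have hreach : ∀ i, G.Reachable u (w i) := fun i => h.trans ((p.drop i).reachable.symm)
  -- upper bounds on end distances
  have hto : ∀ i, G.dist u (w i) ≤ i := fun i => stmt2_dist_getVert_le p i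
  have hfrom : ∀ i, i ≤ d → G.dist (w i) v ≤ d - i := by
    intro i hi
    have := stmt2_dist_getVert_le p.reverse (d - i)
    rw [SimpleGraph.Walk.getVert_reverse, hp] at this
    have h2 : d - (d - i) = i := Nat.sub_sub_self hi
    rw [h2] at this
    rw [SimpleGraph.dist_comm]
    exact this
  -- lower bound on distances between intermediate vertices
  have hlow : ∀ i j, i ≤ j → j ≤ d → j - i ≤ G.dist (w i) (w j) := by
    intro i j hij hjd
    have t1 : d ≤ G.dist u (w i) + G.dist (w i) v :=
      stmt2_tri (hreach i) ((hreach i).symm.trans h)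
    have t2 : G.dist (w i) v ≤ G.dist (w i) (w j) + G.dist (w j) v :=
      stmt2_tri ((hreach i).symm.trans (hreach j)) ((hreach j).symm.trans h)
    have := hto i
    have := hfrom j hjd
    omega
  set k := d / 3 + 1 with hk
  set N : ℕ → Finset V := fun s => insert (w (3 * s)) (G.neighborFinset (w (3 * s))) with hN
  have hcardN : ∀ s, τ + 1 ≤ (N s).card := by
    intro s
    have : w (3 * s) ∉ G.neighborFinset (w (3 * s)) := by
      rw [SimpleGraph.mem_neighborFinset]
      exact G.irrefl
    rw [hN]
    rw [Finset.card_insert_of_notMem this]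
    have := hdeg (w (3 * s))
    rw [SimpleGraph.card_neighborFinset_eq_degree]
    omega
  have hdisj : ∀ s ∈ Finset.range k, ∀ t ∈ Finset.range k, s ≠ t → Disjoint (N s) (N t) := by
    intro s hs t ht hst
    rw [Finset.disjoint_left]
    intro x hxs hxt
    have key : ∀ a : ℕ, x ∈ N a → G.dist (w (3 * a)) x ≤ 1 ∧ G.Reachable (w (3 * a)) x := by
      intro a hx
      rw [hN, Finset.mem_insert, SimpleGraph.mem_neighborFinset] at hx
      rcases hx with rfl | hadj
      · exact ⟨by rw [SimpleGraph.dist_self]; exact Nat.zero_le 1, SimpleGraph.Reachable.refl _⟩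
      · exact ⟨by simpa using SimpleGraph.dist_le (SimpleGraph.Walk.cons hadj SimpleGraph.Walk.nil),
          ⟨SimpleGraph.Walk.cons hadj SimpleGraph.Walk.nil⟩⟩
    obtain ⟨ds, rs⟩ := key s hxs
    obtain ⟨dt, rt⟩ := key t hxt
    have hdd : G.dist (w (3 * s)) (w (3 * t)) ≤ 2 := by
      have := stmt2_tri rs rt.symm
      have : G.dist x (w (3 * t)) ≤ 1 := by rw [SimpleGraph.dist_comm]; exact dt
      have := stmt2_tri rs rt.symm
      omega
    rw [Finset.mem_range] at hs ht
    -- WLOG s < t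
    rcases Nat.lt_or_ge s t with hlt | hge
    · have h3 : 3 * t ≤ d := by omega
      have := hlow (3 * s) (3 * t) (by omega) h3
      omega
    · have hlt : t < s := lt_of_le_of_ne hge (Ne.symm hst)
      have h3 : 3 * s ≤ d := by omega
      have := hlow (3 * t) (3 * s) (by omega) h3
      rw [SimpleGraph.dist_comm] at hdd
      omega
  have hsum : k * (τ + 1) ≤ Fintype.card V := by
    calc k * (τ + 1) = ∑ _s ∈ Finset.range k, (τ + 1) := by
          rw [Finset.sum_const, Finset.card_range, smul_eq_mul]
      _ ≤ ∑ s ∈ Finset.range k, (N s).card := Finset.sum_le_sum fun s _ => hcardN s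
      _ = ((Finset.range k).biUnion N).card := (Finset.card_biUnion hdisj).symm
      _ ≤ Fintype.card V := Finset.card_le_univ _
  have hnat : d * τ ≤ 3 * Fintype.card V := by
    have h1 : d ≤ 3 * k := by omega
    calc d * τ ≤ (3 * k) * τ := Nat.mul_le_mul_right _ h1
      _ = 3 * (k * τ) := by ring
      _ ≤ 3 * (k * (τ + 1)) := Nat.mul_le_mul_left _ (Nat.mul_le_mul_left _ (by omega))
      _ ≤ 3 * Fintype.card V := Nat.mul_le_mul_left _ hsum
  have hτpos : (0 : ℝ) < (τ : ℝ) := by exact_mod_cast hτ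
  rw [le_div_iff₀ hτpos]
  have : (d : ℝ) * τ ≤ 3 * (Fintype.card V : ℝ) := by exact_mod_cast hnat
  have hn : (0 : ℝ) ≤ (Fintype.card V : ℝ) := Nat.cast_nonneg _
  linarith
end

section
/- Let W be an α-expander on vertex set V with maximum degree at most d (α > 0, d ≥ 1), and let F ⊆ E(W) be a set of edges with |F| ≤ α|S|/2, where S ⊆ V is a nonempty set with |S| ≤ |V|/2. Then in the graph W' = W \ F (delete the edges of F), the set S together with its W'-neighbors has size at least |S| · (1 + α/(2d)). -/
/-- Edges of a multigraph (given by its endpoint function) crossing between `A` and `B`. -/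
def crossSet {V E : Type*} (ends : E → V × V) (A B : Set V) : Set E :=
  {e | ((ends e).1 ∈ A ∧ (ends e).2 ∈ B) ∨ ((ends e).1 ∈ B ∧ (ends e).2 ∈ A)}

/-- The neighborhood of a set `S` using only edges outside `F`. -/
def nbhdWithout {V E : Type*} (ends : E → V × V) (F : Set E) (S : Set V) : Set V :=
  {w | ∃ e : E, e ∉ F ∧
    (((ends e).1 ∈ S ∧ (ends e).2 = w) ∨ ((ends e).2 ∈ S ∧ (ends e).1 = w))}

/-- deleting at most α|S|/2 edges from an α-expander of maximum
degree at most d, the set S still expands by a factor (1 + α/(2d)). -/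
theorem stmt4 {V E : Type*} [Fintype V] [Fintype E] (ends : E → V × V)
    (α : ℝ) (d : ℕ) (hα : 0 < α) (hd : 1 ≤ d)
    (hexp : ∀ A B : Set V, A.Nonempty → B.Nonempty → Disjoint A B → A ∪ B = Set.univ →
      α * min (A.ncard : ℝ) (B.ncard : ℝ) ≤ ((crossSet ends A B).ncard : ℝ))
    (hdeg : ∀ v : V, ({e : E | (ends e).1 = v ∨ (ends e).2 = v}.ncard) ≤ d)
    (S : Set V) (hS : S.Nonempty) (hhalf : 2 * S.ncard ≤ Fintype.card V)
    (F : Set E) (hF : (F.ncard : ℝ) ≤ α * (S.ncard : ℝ) / 2) :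
    (S.ncard : ℝ) * (1 + α / (2 * (d : ℝ))) ≤
      (((S ∪ nbhdWithout ends F S)).ncard : ℝ) := by
  classical
  have hSfin : S.Finite := S.toFinite
  have hS1 : 0 < S.ncard := (Set.ncard_pos hSfin).mpr hS
  have hcompl : S.ncard + Sᶜ.ncard = Fintype.card V := by
    rw [← Nat.card_eq_fintype_card]
    exact Set.ncard_add_ncard_compl S
  have hle : S.ncard ≤ Sᶜ.ncard := by omega
  have hScne : Sᶜ.Nonempty := by
    rw [← Set.ncard_pos]
    omega
  have hC := hexp S Sᶜ hS hScne disjoint_compl_right (Set.union_compl_self S)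
  rw [min_eq_left (by exact_mod_cast hle)] at hC
  set C : Set E := crossSet ends S Sᶜ with hCdef
  set C' : Set E := C \ F with hC'def
  have hsplit : C.ncard ≤ C'.ncard + F.ncard := Set.ncard_le_ncard_diff_add_ncard C F
  have hC'lb : α * (S.ncard : ℝ) / 2 ≤ (C'.ncard : ℝ) := by
    have : (C.ncard : ℝ) ≤ (C'.ncard : ℝ) + (F.ncard : ℝ) := by exact_mod_cast hsplit
    linarith
  set N : Set V := nbhdWithout ends F S \ S with hNdef
  -- counting: C' ≤ d * N
  have hcount : C'.ncard ≤ d * N.ncard := by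
    have hsub : C'.toFinset ⊆ N.toFinset.biUnion
        (fun v => {e : E | (ends e).1 = v ∨ (ends e).2 = v}.toFinset) := by
      intro e he
      rw [Set.mem_toFinset] at he
      obtain ⟨hec, hef⟩ := he
      rcases hec with ⟨h1, h2⟩ | ⟨h1, h2⟩
      · refine Finset.mem_biUnion.mpr ⟨(ends e).2, ?_, ?_⟩
        · rw [Set.mem_toFinset]
          exact ⟨⟨e, hef, Or.inl ⟨h1, rfl⟩⟩, h2⟩
        · rw [Set.mem_toFinset]; exact Or.inr rfl
      · refine Finset.mem_biUnion.mpr ⟨(ends e).1, ?_, ?_⟩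
        · rw [Set.mem_toFinset]
          exact ⟨⟨e, hef, Or.inr ⟨h2, rfl⟩⟩, h1⟩
        · rw [Set.mem_toFinset]; exact Or.inl rfl
    have h1 : C'.toFinset.card ≤ _ := Finset.card_le_card hsub
    have h2 := Finset.card_biUnion_le (s := N.toFinset)
      (t := fun v => {e : E | (ends e).1 = v ∨ (ends e).2 = v}.toFinset)
    have h3 : ∑ v ∈ N.toFinset, {e : E | (ends e).1 = v ∨ (ends e).2 = v}.toFinset.card
        ≤ d * N.toFinset.card := by
      calc ∑ v ∈ N.toFinset, {e : E | (ends e).1 = v ∨ (ends e).2 = v}.toFinset.card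
          ≤ ∑ _v ∈ N.toFinset, d := by
            refine Finset.sum_le_sum fun v _ => ?_
            rw [← Set.ncard_eq_toFinset_card']
            exact hdeg v
        _ = d * N.toFinset.card := by rw [Finset.sum_const, smul_eq_mul, Nat.mul_comm]
    rw [Set.ncard_eq_toFinset_card' C', Set.ncard_eq_toFinset_card' N]
    omega
  have hdisj : Disjoint S N := Set.disjoint_sdiff_right
  have hunion : (S ∪ N).ncard = S.ncard + N.ncard :=
    Set.ncard_union_eq hdisj hSfin N.toFinite
  have hmono : (S ∪ N).ncard ≤ (S ∪ nbhdWithout ends F S).ncard :=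
    Set.ncard_le_ncard (Set.union_subset_union_right S Set.diff_subset)
      (S ∪ nbhdWithout ends F S).toFinite
  have hd0 : (0:ℝ) < (d:ℝ) := by exact_mod_cast hd
  have hcountR : (C'.ncard : ℝ) ≤ (d:ℝ) * (N.ncard : ℝ) := by exact_mod_cast hcount
  have key : (S.ncard : ℝ) * α / (2 * (d:ℝ)) ≤ (N.ncard : ℝ) := by
    rw [div_le_iff₀ (by positivity)]
    nlinarith
  have hfinal : (S.ncard : ℝ) + (N.ncard : ℝ) ≤ ((S ∪ nbhdWithout ends F S).ncard : ℝ) := by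
    have : ((S ∪ N).ncard : ℝ) ≤ ((S ∪ nbhdWithout ends F S).ncard : ℝ) := by
      exact_mod_cast hmono
    rw [hunion] at this
    push_cast at this
    linarith
  have expand : (S.ncard : ℝ) * (1 + α / (2 * (d:ℝ)))
      = (S.ncard : ℝ) + (S.ncard : ℝ) * α / (2 * (d:ℝ)) := by ring
  linarith [expand ▸ le_refl ((S.ncard : ℝ) * (1 + α / (2 * (d:ℝ))))]
end

section
/- Let G and W be graphs with V(W) = V(G) = V. Suppose W is a (1/2)-expander with maximum degree at most d, and for every edge e = (u,v) of W there is a path P(e) in G from u to v, such that every vertex of G lies on at most η of the paths {P(e) : e ∈ E(W)}. Then for every vertex cut (Y, X, Z) of G with Y and Z nonempty (no edge of G joins Y to Z), we have |X| · (d + η) ≥ min(|Y|, |Z|) / 2. -/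
lemma count_aux {V E : Type*} [Fintype V] [Fintype E]
    (T : Set E) (X : Set V) (c : ℕ) (R : E → V → Prop)
    (h1 : ∀ e ∈ T, ∃ x ∈ X, R e x)
    (h2 : ∀ x ∈ X, {e | R e x}.ncard ≤ c) :
    T.ncard ≤ X.ncard * c := by
  classical
  rw [Set.ncard_eq_toFinset_card' T, Set.ncard_eq_toFinset_card' X]
  have hsub : T.toFinset ⊆ X.toFinset.biUnion (fun x => ({e | R e x} : Set E).toFinset) := by
    intro e he
    simp only [Set.mem_toFinset] at he
    obtain ⟨x, hx, hR⟩ := h1 e he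
    simp only [Finset.mem_biUnion, Set.mem_toFinset]
    exact ⟨x, hx, hR⟩
  calc T.toFinset.card ≤ _ := Finset.card_le_card hsub
    _ ≤ ∑ x ∈ X.toFinset, ({e | R e x} : Set E).toFinset.card := Finset.card_biUnion_le
    _ ≤ ∑ _x ∈ X.toFinset, c := Finset.sum_le_sum (by
        intro x hx
        rw [← Set.ncard_eq_toFinset_card']
        exact h2 x (Set.mem_toFinset.mp hx))
    _ = X.toFinset.card * c := by rw [Finset.sum_const, smul_eq_mul]

lemma walk_through {V : Type*} {G : SimpleGraph V} (Y X Z : Set V)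
    (hcover : Y ∪ X ∪ Z = Set.univ)
    (hcut : ∀ y ∈ Y, ∀ z ∈ Z, ¬ G.Adj y z)
    (hdYZ : Disjoint Y Z)
    {u v : V} (w : G.Walk u v) :
    u ∈ Y → v ∈ Z → ∃ x ∈ X, x ∈ w.support := by
  induction w with
  | nil => exact fun hu hv => absurd hv (Set.disjoint_left.mp hdYZ hu)
  | @cons a b c h w ih =>
    intro hu hv
    have hb : b ∈ Y ∪ X ∪ Z := hcover.symm ▸ Set.mem_univ b
    rcases hb with (hb | hb) | hb
    · obtain ⟨x, hx, hxs⟩ := ih hb hv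
      exact ⟨x, hx, by simp [SimpleGraph.Walk.support_cons, hxs]⟩
    · exact ⟨b, hb, by simp [SimpleGraph.Walk.support_cons,
        SimpleGraph.Walk.start_mem_support]⟩
    · exact absurd h (hcut a hu b hb)

/-- witness-expander bound for vertex cuts: if a (1/2)-expander W of
maximum degree d embeds into G via paths with vertex-congestion η, then every
vertex cut (Y,X,Z) of G with Y,Z nonempty satisfies |X|(d+η) ≥ min(|Y|,|Z|)/2. -/
theorem stmt8 {V EW : Type*} [Fintype V] [Fintype EW]
    (G : SimpleGraph V) (ends : EW → V × V) (d η : ℕ)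
    (hexpW : ∀ A B : Set V, A.Nonempty → B.Nonempty → Disjoint A B → A ∪ B = Set.univ →
      (1 / 2 : ℝ) * min (A.ncard : ℝ) (B.ncard : ℝ) ≤ ((crossSet ends A B).ncard : ℝ))
    (hdeg : ∀ v : V, ({e : EW | (ends e).1 = v ∨ (ends e).2 = v}.ncard) ≤ d)
    (P : ∀ e : EW, G.Walk (ends e).1 (ends e).2)
    (hpath : ∀ e : EW, (P e).IsPath)
    (hcong : ∀ x : V, ({e : EW | x ∈ (P e).support}.ncard) ≤ η)
    (Y X Z : Set V) (hY : Y.Nonempty) (hZ : Z.Nonempty)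
    (hdYX : Disjoint Y X) (hdYZ : Disjoint Y Z) (hdXZ : Disjoint X Z)
    (hcover : Y ∪ X ∪ Z = Set.univ)
    (hcut : ∀ y ∈ Y, ∀ z ∈ Z, ¬ G.Adj y z) :
    min (Y.ncard : ℝ) (Z.ncard : ℝ) / 2 ≤ (X.ncard : ℝ) * ((d : ℝ) + (η : ℝ)) := by
  classical
  set B := X ∪ Z with hB
  have hBne : B.Nonempty := hZ.mono Set.subset_union_right
  have hdYB : Disjoint Y B := Set.disjoint_union_right.mpr ⟨hdYX, hdYZ⟩
  have hcov' : Y ∪ B = Set.univ := by rw [hB, ← Set.union_assoc]; exact hcover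
  have h1 := hexpW Y B hY hBne hdYB hcov'
  -- split crossing edges
  set SX := crossSet ends Y X with hSX
  set SZ := crossSet ends Y Z with hSZ
  have hsplit : crossSet ends Y B ⊆ SX ∪ SZ := by
    intro e he
    rcases he with ⟨h1', h2'⟩ | ⟨h1', h2'⟩
    · rcases h2' with h2' | h2'
      · exact Or.inl (Or.inl ⟨h1', h2'⟩)
      · exact Or.inr (Or.inl ⟨h1', h2'⟩)
    · rcases h1' with h1' | h1'
      · exact Or.inl (Or.inr ⟨h1', h2'⟩)
      · exact Or.inr (Or.inr ⟨h1', h2'⟩)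
  have n3 : (crossSet ends Y B).ncard ≤ SX.ncard + SZ.ncard :=
    le_trans (Set.ncard_le_ncard hsplit (Set.toFinite _)) (Set.ncard_union_le _ _)
  have n1 : SX.ncard ≤ X.ncard * d := by
    apply count_aux SX X d (fun e x => (ends e).1 = x ∨ (ends e).2 = x)
    · intro e he
      rcases he with ⟨_, h2'⟩ | ⟨h1', _⟩
      · exact ⟨(ends e).2, h2', Or.inr rfl⟩
      · exact ⟨(ends e).1, h1', Or.inl rfl⟩
    · exact fun x _ => hdeg x
  have n2 : SZ.ncard ≤ X.ncard * η := by
    apply count_aux SZ X η (fun e x => x ∈ (P e).support)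
    · intro e he
      rcases he with ⟨h1', h2'⟩ | ⟨h1', h2'⟩
      · exact walk_through Y X Z hcover hcut hdYZ (P e) h1' h2'
      · obtain ⟨x, hx, hxs⟩ := walk_through Y X Z hcover hcut hdYZ (P e).reverse h2' h1'
        rw [SimpleGraph.Walk.support_reverse, List.mem_reverse] at hxs
        exact ⟨x, hx, hxs⟩
    · exact fun x _ => hcong x
  -- min inequality
  have hZB : (Z.ncard : ℝ) ≤ (B.ncard : ℝ) := by
    exact_mod_cast Set.ncard_le_ncard (Set.subset_union_right) (Set.toFinite B)
  have hmin : min (Y.ncard : ℝ) (Z.ncard : ℝ) ≤ min (Y.ncard : ℝ) (B.ncard : ℝ) :=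
    min_le_min le_rfl hZB
  have n1' : (SX.ncard : ℝ) ≤ (X.ncard : ℝ) * d := by exact_mod_cast n1
  have n2' : (SZ.ncard : ℝ) ≤ (X.ncard : ℝ) * η := by exact_mod_cast n2
  have n3' : ((crossSet ends Y B).ncard : ℝ) ≤ (SX.ncard : ℝ) + (SZ.ncard : ℝ) := by
    exact_mod_cast n3
  linarith
end

section
/- Let 0 < α ≤ 1/2. Let H be a 4α-expander on vertex set S, let T be a finite set disjoint from S, and let M be a matching consisting of |T| edges, matching each vertex of T to a distinct vertex of S. Then the graph W on vertex set S ∪ T with edge set E(H) ∪ M is an α-expander. -/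
/-- Edges of a simple graph `G` crossing between `A` and `B`. -/
def crossSetG {V : Type*} (G : SimpleGraph V) (A B : Set V) : Set (Sym2 V) :=
  {f | f ∈ G.edgeSet ∧ ∃ a ∈ A, ∃ b ∈ B, f = s(a, b)}

lemma key_ineq (α a a' b b' tA tB : ℝ) (hα1 : 0 < α) (hα2 : α ≤ 1/2)
    (ha : 0 ≤ a) (hb : 0 ≤ b) (ha' : 0 ≤ a') (hb' : 0 ≤ b')
    (h1 : 0 ≤ tA) (h2 : a' - a ≤ tA) (h3 : 0 ≤ tB) (h4 : b' - b ≤ tB) :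
    α * min (a+a') (b+b') ≤ 4*α*min a b + tA + tB := by
  rcases le_total (a+a') (b+b') with h|h <;> rcases le_total a b with h'|h' <;>
    rw [show min (a+a') (b+b') = _ from by first | exact min_eq_left h | exact min_eq_right h] <;>
    rw [show min a b = _ from by first | exact min_eq_left h' | exact min_eq_right h'] <;>
    nlinarith [mul_nonneg hα1.le ha, mul_nonneg hα1.le hb, mul_nonneg hα1.le ha',
      mul_nonneg hα1.le hb', mul_nonneg (by linarith : (0:ℝ) ≤ 1 - 2*α) h1,
      mul_nonneg (by linarith : (0:ℝ) ≤ 1 - 2*α) h3,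
      mul_nonneg hα1.le h1, mul_nonneg hα1.le h3]

/-- adding a pendant matching from T to a 4α-expander on S yields an
α-expander on S ∪ T (for 0 < α ≤ 1/2). -/
theorem stmt12 {V : Type*} [Fintype V] (α : ℝ) (hα1 : 0 < α) (hα2 : α ≤ 1 / 2)
    (S T : Set V) (hST : Disjoint S T) (hcover : S ∪ T = Set.univ)
    (H : SimpleGraph V) (hHS : ∀ a b : V, H.Adj a b → a ∈ S ∧ b ∈ S)
    (hexpH : ∀ A B : Set V, A.Nonempty → B.Nonempty → Disjoint A B → A ∪ B = S →
      4 * α * min (A.ncard : ℝ) (B.ncard : ℝ) ≤ ((crossSetG H A B).ncard : ℝ))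
    (f : V → V) (hfS : ∀ t ∈ T, f t ∈ S) (hfinj : Set.InjOn f T) :
    ∀ A B : Set V, A.Nonempty → B.Nonempty → Disjoint A B → A ∪ B = Set.univ →
      α * min (A.ncard : ℝ) (B.ncard : ℝ) ≤
        ((crossSetG (H ⊔ SimpleGraph.fromRel (fun a b => a ∈ T ∧ b = f a)) A B).ncard : ℝ) := by
  intro A B hA hB hAB hABu
  classical
  set W := H ⊔ SimpleGraph.fromRel (fun a b => a ∈ T ∧ b = f a) with hWdef
  set AS := A ∩ S with hAS
  set AT := A ∩ T with hAT
  set BS := B ∩ S with hBS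
  set BT := B ∩ T with hBT
  -- crossing matching vertices
  set TA := {t : V | t ∈ T ∧ t ∈ A ∧ f t ∈ B} with hTA
  set TB := {t : V | t ∈ T ∧ t ∈ B ∧ f t ∈ A} with hTB
  set g : V → Sym2 V := fun t => s(t, f t) with hg
  have hTAsub : TA ⊆ T := fun t ht => ht.1
  have hTBsub : TB ⊆ T := fun t ht => ht.1
  have hginj : Set.InjOn g T := by
    intro x hx y hy hxy
    simp only [hg, Sym2.eq_iff] at hxy
    rcases hxy with ⟨h1, _⟩ | ⟨h1, h2⟩
    · exact h1
    · exact absurd (h1 ▸ hfS y hy) (fun hxS => hST.ne_of_mem hxS hx rfl)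
  set X := g '' (TA ∪ TB) with hX
  set C := crossSetG H AS BS with hC
  -- H-edges have both endpoints in S
  have hHedge : ∀ e ∈ H.edgeSet, ∀ v ∈ e, v ∈ S := by
    intro e he v hv
    induction e using Sym2.ind with
    | _ x y =>
      rw [SimpleGraph.mem_edgeSet] at he
      rcases Sym2.mem_iff.mp hv with rfl | rfl
      · exact (hHS _ _ he).1
      · exact (hHS _ _ he).2
  have hCsub : C ⊆ crossSetG W A B := by
    rintro e ⟨he, a, haM, b, hbM, rfl⟩
    exact ⟨SimpleGraph.edgeSet_mono le_sup_left he, a, haM.1, b, hbM.1, rfl⟩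
  have hXsub : X ⊆ crossSetG W A B := by
    rintro e ⟨t, ht, rfl⟩
    have htT : t ∈ T := by rcases ht with h | h <;> exact h.1
    have hne : t ≠ f t := fun h => hST.ne_of_mem (hfS t htT) htT h.symm
    have hedge : g t ∈ W.edgeSet := by
      rw [hg, SimpleGraph.mem_edgeSet]
      exact Or.inr ⟨hne, Or.inl ⟨htT, rfl⟩⟩
    rcases ht with h | h
    · exact ⟨hedge, t, h.2.1, f t, h.2.2, rfl⟩
    · exact ⟨hedge, f t, h.2.2, t, h.2.1, Sym2.eq_swap.symm⟩
  have hdisjCX : Disjoint C X := by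
    rw [Set.disjoint_left]
    rintro e ⟨he, _⟩ ⟨t, ht, rfl⟩
    have htT : t ∈ T := by rcases ht with h | h <;> exact h.1
    have : t ∈ S := hHedge _ he t (by rw [hg]; exact Sym2.mem_mk_left t (f t))
    exact hST.ne_of_mem this htT rfl
  -- counting
  have hXcard : X.ncard = (TA ∪ TB).ncard :=
    Set.ncard_image_of_injOn (hginj.mono (Set.union_subset hTAsub hTBsub))
  have hTAB : (TA ∪ TB).ncard = TA.ncard + TB.ncard := by
    refine Set.ncard_union_eq ?_ (Set.toFinite _) (Set.toFinite _)
    rw [Set.disjoint_left]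
    intro t ht ht'
    exact Set.disjoint_left.mp hAB ht.2.1 ht'.2.1
  have hcount : (C.ncard : ℝ) + (TA.ncard + TB.ncard : ℕ) ≤ ((crossSetG W A B).ncard : ℝ) := by
    have := Set.ncard_union_eq hdisjCX (Set.toFinite _) (Set.toFinite _)
    have hle : (C ∪ X).ncard ≤ (crossSetG W A B).ncard :=
      Set.ncard_le_ncard (Set.union_subset hCsub hXsub) (Set.toFinite _)
    rw [this, hXcard, hTAB] at hle
    exact_mod_cast hle
  -- lower bounds on TA, TB
  have hTlb : ∀ (P Q : Set V), Disjoint P Q → P ∪ Q = Set.univ →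
      (P ∩ T).ncard ≤ {t : V | t ∈ T ∧ t ∈ P ∧ f t ∈ Q}.ncard + (P ∩ S).ncard := by
    intro P Q hPQ hPQu
    set U1 := {t : V | t ∈ T ∧ t ∈ P ∧ f t ∈ Q} with hU1
    set U2 := {t : V | t ∈ T ∧ t ∈ P ∧ f t ∈ P} with hU2
    have hsplit : P ∩ T ⊆ U1 ∪ U2 := by
      rintro t ⟨htP, htT⟩
      have : f t ∈ P ∪ Q := hPQu ▸ Set.mem_univ (f t)
      rcases this with h | h
      · exact Or.inr ⟨htT, htP, h⟩
      · exact Or.inl ⟨htT, htP, h⟩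
    have h2 : U2.ncard ≤ (P ∩ S).ncard := by
      have himg : f '' U2 ⊆ P ∩ S := by
        rintro _ ⟨t, ht, rfl⟩
        exact ⟨ht.2.2, hfS t ht.1⟩
      calc U2.ncard = (f '' U2).ncard :=
            (Set.ncard_image_of_injOn (hfinj.mono (fun t ht => ht.1))).symm
        _ ≤ (P ∩ S).ncard := Set.ncard_le_ncard himg (Set.toFinite _)
    calc (P ∩ T).ncard ≤ (U1 ∪ U2).ncard := Set.ncard_le_ncard hsplit (Set.toFinite _)
      _ ≤ U1.ncard + U2.ncard := Set.ncard_union_le _ _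
      _ ≤ U1.ncard + (P ∩ S).ncard := by omega
  have hTAlb : (AT.ncard : ℝ) - AS.ncard ≤ TA.ncard := by
    have := hTlb A B hAB hABu
    rw [← hAT, ← hAS, ← hTA] at this
    have : (AT.ncard : ℝ) ≤ TA.ncard + AS.ncard := by exact_mod_cast this
    linarith
  have hTBlb : (BT.ncard : ℝ) - BS.ncard ≤ TB.ncard := by
    have := hTlb B A hAB.symm (Set.union_comm A B ▸ hABu)
    rw [← hBT, ← hBS, ← hTB] at this
    have : (BT.ncard : ℝ) ≤ TB.ncard + BS.ncard := by exact_mod_cast this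
    linarith
  -- cardinalities of A and B
  have hAcard : (A.ncard : ℝ) = AS.ncard + AT.ncard := by
    have : AS ∪ AT = A := by rw [hAS, hAT, ← Set.inter_union_distrib_left, hcover, Set.inter_univ]
    rw [← this, Set.ncard_union_eq (hST.mono Set.inter_subset_right Set.inter_subset_right)
      (Set.toFinite _) (Set.toFinite _)]
    push_cast; ring
  have hBcard : (B.ncard : ℝ) = BS.ncard + BT.ncard := by
    have : BS ∪ BT = B := by rw [hBS, hBT, ← Set.inter_union_distrib_left, hcover, Set.inter_univ]
    rw [← this, Set.ncard_union_eq (hST.mono Set.inter_subset_right Set.inter_subset_right)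
      (Set.toFinite _) (Set.toFinite _)]
    push_cast; ring
  -- lower bound on C
  have hClb : 4 * α * min (AS.ncard : ℝ) (BS.ncard : ℝ) ≤ (C.ncard : ℝ) := by
    rcases AS.eq_empty_or_nonempty with h | hASne
    · rw [h]; simp only [Set.ncard_empty, Nat.cast_zero]
      rw [min_eq_left (by positivity)]
      simp only [mul_zero]; positivity
    rcases BS.eq_empty_or_nonempty with h | hBSne
    · rw [h]; simp only [Set.ncard_empty, Nat.cast_zero]
      rw [min_eq_right (by positivity)]
      simp only [mul_zero]; positivity
    refine hexpH AS BS hASne hBSne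
      (hAB.mono Set.inter_subset_left Set.inter_subset_left) ?_
    rw [hAS, hBS, ← Set.union_inter_distrib_right, hABu, Set.univ_inter]
  -- final arithmetic
  rw [hAcard, hBcard]
  have := key_ineq α (AS.ncard) (AT.ncard) (BS.ncard) (BT.ncard) (TA.ncard) (TB.ncard)
    hα1 (by linarith) (by positivity) (by positivity) (by positivity) (by positivity)
    (by positivity) hTAlb (by positivity) hTBlb
  push_cast at hcount ⊢
  linarith
end
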